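/- Let n > 0, x > 0, δ ∈ ℝ and y = x²/(n+x²). Then P_n(x;δ) = 1/2 − (e^{-δ²/2}/(2 B(1/2, n/2))) ∫₀^{1-y} t^{n/2-1} (1-t)^{-1/2} ₁F₁((n+1)/2; 1/2; δ²(1-t)/2) dt. -/

import Mathlib

open Real MeasureTheory

/-- Complementary error function. -/
noncomputable def erfc (z : ℝ) : ℝ := (2 / Real.sqrt π) * ∫ t in Set.Ioi z, Real.exp (-t^2)

/-- Error function. -/
noncomputable def erf (z : ℝ) : ℝ := 1 - erfc z

/-- Beta function B(a,b) = Γ(a)Γ(b)/Γ(a+b). -/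
noncomputable def betaFn (a b : ℝ) : ℝ := Real.Gamma a * Real.Gamma b / Real.Gamma (a + b)

/-- Regularized incomplete beta function I_y(a,b). -/
noncomputable def regIncBeta (y a b : ℝ) : ℝ :=
  (1 / betaFn a b) * ∫ t in (0:ℝ)..y, t ^ (a - 1) * (1 - t) ^ (b - 1)

/-- The function P_n(x;δ). -/
noncomputable def Pnt (n x δ : ℝ) : ℝ :=
  (1/2) * Real.exp (-δ^2/2) *
    ∑' j : ℕ, ((δ^2/2)^j / (Nat.factorial j : ℝ)) *
      regIncBeta (x^2/(n + x^2)) ((j : ℝ) + 1/2) (n/2)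

/-- The function Q_n(x;δ). -/
noncomputable def Qnt (n x δ : ℝ) : ℝ :=
  (1/2) * Real.exp (-δ^2/2) *
    ∑' j : ℕ, (δ / Real.sqrt 2) * ((δ^2/2)^j / Real.Gamma ((j : ℝ) + 3/2)) *
      regIncBeta (x^2/(n + x^2)) ((j : ℝ) + 1) (n/2)

/-- The noncentral t cumulative distribution function F_n(x;δ). -/
noncomputable def Fnt (n x δ : ℝ) : ℝ :=
  (1/2) * erfc (δ / Real.sqrt 2) + Pnt n x δ + Qnt n x δ

/-- The function R_n(x;δ) = erfc(δ/√2)/2 + Q_n(x;δ) − P_n(x;δ). -/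
noncomputable def Rnt (n x δ : ℝ) : ℝ :=
  (1/2) * erfc (δ / Real.sqrt 2) + Qnt n x δ - Pnt n x δ

/-- Kummer's confluent hypergeometric function ₁F₁(a;b;z). -/
noncomputable def kummerM (a b z : ℝ) : ℝ :=
  ∑' k : ℕ, (Real.Gamma (a + k) / Real.Gamma a) / (Real.Gamma (b + k) / Real.Gamma b) *
    z^k / (Nat.factorial k : ℝ)

/- ### Auxiliary lemmas -/

lemma rb_eqOn {a b : ℝ} (t : ℝ) (ht : t ∈ Set.uIcc (0:ℝ) 1) :
    ((t ^ (a-1) * (1-t) ^ (b-1) : ℝ) : ℂ)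
      = (t:ℂ) ^ ((a:ℂ) - 1) * (1 - (t:ℂ)) ^ ((b:ℂ) - 1) := by
  rw [Set.uIcc_of_le (by norm_num : (0:ℝ) ≤ 1)] at ht
  push_cast
  rw [Complex.ofReal_cpow ht.1, Complex.ofReal_cpow (by linarith [ht.2] : (0:ℝ) ≤ 1 - t)]
  push_cast
  ring

lemma rb_intble {a b : ℝ} (ha : 0 < a) (hb : 0 < b) :
    IntervalIntegrable (fun t : ℝ => t ^ (a-1) * (1-t) ^ (b-1)) volume 0 1 := by
  have h := Complex.betaIntegral_convergent (u := a) (v := b) (by simpa) (by simpa)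
  have h2 : IntervalIntegrable (fun t : ℝ =>
      ((t ^ (a-1) * (1-t) ^ (b-1) : ℝ) : ℂ)) volume 0 1 := by
    refine h.congr (fun t ht => ?_)
    exact (rb_eqOn t (Set.uIoc_subset_uIcc ht)).symm
  rw [intervalIntegrable_iff] at h2 ⊢
  simpa [IntegrableOn] using h2.re

lemma betaFn_pos {a b : ℝ} (ha : 0 < a) (hb : 0 < b) : 0 < betaFn a b := by
  unfold betaFn
  have := Real.Gamma_pos_of_pos ha
  have := Real.Gamma_pos_of_pos hb
  have := Real.Gamma_pos_of_pos (by linarith : 0 < a + b)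
  positivity

lemma rb_value {a b : ℝ} (ha : 0 < a) (hb : 0 < b) :
    ∫ t in (0:ℝ)..1, t ^ (a-1) * (1-t) ^ (b-1) = betaFn a b := by
  have h := Complex.Gamma_mul_Gamma_eq_betaIntegral (s := a) (t := b) (by simpa) (by simpa)
  have hG : Complex.Gamma ((a:ℂ) + b) ≠ 0 := by
    rw [← Complex.ofReal_add, Complex.Gamma_ofReal]
    exact_mod_cast (Real.Gamma_pos_of_pos (by linarith)).ne'
  have hbeta : Complex.betaIntegral a b
      = ((∫ t in (0:ℝ)..1, t ^ (a-1) * (1-t) ^ (b-1) : ℝ) : ℂ) := by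
    rw [Complex.betaIntegral, ← intervalIntegral.integral_ofReal]
    exact intervalIntegral.integral_congr fun t ht => (rb_eqOn t ht).symm
  rw [hbeta] at h
  rw [← Complex.ofReal_inj]
  unfold betaFn
  rw [Complex.ofReal_div, Complex.ofReal_mul, ← Complex.Gamma_ofReal, ← Complex.Gamma_ofReal,
    ← Complex.Gamma_ofReal, Complex.ofReal_add, eq_div_iff hG]
  linear_combination -h

lemma rb_nonnegOn {a b : ℝ} {t : ℝ} (ht0 : 0 ≤ t) (ht1 : t ≤ 1) :
    0 ≤ t ^ (a-1) * (1-t) ^ (b-1) :=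
  mul_nonneg (Real.rpow_nonneg ht0 _) (Real.rpow_nonneg (by linarith) _)

lemma regIncBeta_reflect {y a b : ℝ} (hy0 : 0 ≤ y) (hy1 : y ≤ 1) (ha : 0 < a) (hb : 0 < b) :
    regIncBeta y a b = 1 - regIncBeta (1-y) b a := by
  have hB := betaFn_pos ha hb
  have hBsymm : betaFn b a = betaFn a b := by unfold betaFn; rw [mul_comm, add_comm]
  have hsub : (∫ t in (0:ℝ)..(1-y), t ^ (b-1) * (1-t) ^ (a-1))
      = ∫ t in y..1, t ^ (a-1) * (1-t) ^ (b-1) := by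
    have h := intervalIntegral.integral_comp_sub_left
      (a := 0) (b := 1-y) (fun t : ℝ => t ^ (a-1) * (1-t) ^ (b-1)) 1
    rw [sub_zero, show (1:ℝ) - (1-y) = y by ring] at h
    rw [← h]
    refine intervalIntegral.integral_congr fun s hs => ?_
    have hs' : s ∈ Set.Icc (0:ℝ) (1-y) := by
      rwa [Set.uIcc_of_le (by linarith : (0:ℝ) ≤ 1-y)] at hs
    show s ^ (b-1) * (1-s) ^ (a-1) = (1-s) ^ (a-1) * (1-(1-s)) ^ (b-1)
    rw [show (1:ℝ) - (1-s) = s by ring]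
    ring
  have hadd : (∫ t in (0:ℝ)..y, t ^ (a-1) * (1-t) ^ (b-1))
      + (∫ t in y..1, t ^ (a-1) * (1-t) ^ (b-1)) = betaFn a b := by
    rw [intervalIntegral.integral_add_adjacent_intervals
      ((rb_intble ha hb).mono_set (Set.uIcc_subset_uIcc (by simp) (by simp [hy0, hy1])))
      ((rb_intble ha hb).mono_set (Set.uIcc_subset_uIcc (by simp [hy0, hy1]) (by simp)))]
    exact rb_value ha hb
  unfold regIncBeta
  rw [hsub, hBsymm]
  field_simp
  linarith [hadd]

lemma regIncBeta_nonneg {y a b : ℝ} (hy0 : 0 ≤ y) (hy1 : y ≤ 1) (ha : 0 < a) (hb : 0 < b) :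
    0 ≤ regIncBeta y a b := by
  have hB := betaFn_pos ha hb
  refine mul_nonneg (by positivity) ?_
  refine intervalIntegral.integral_nonneg hy0 fun u hu => ?_
  exact rb_nonnegOn hu.1 (le_trans hu.2 hy1)

lemma regIncBeta_le_one {y a b : ℝ} (hy0 : 0 ≤ y) (hy1 : y ≤ 1) (ha : 0 < a) (hb : 0 < b) :
    regIncBeta y a b ≤ 1 := by
  have hB := betaFn_pos ha hb
  unfold regIncBeta
  rw [one_div, inv_mul_le_iff₀ hB, mul_one, ← rb_value ha hb]
  refine intervalIntegral.integral_mono_interval le_rfl hy0 hy1 ?_ (rb_intble ha hb)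
  refine (ae_restrict_iff' measurableSet_Ioc).2 (Filter.Eventually.of_forall fun t ht => ?_)
  exact rb_nonnegOn ht.1.le ht.2

lemma gamma_term_eq {n c u : ℝ} (hn : 0 < n) (hu : 0 < u) (j : ℕ) :
    (c^j / (Nat.factorial j : ℝ)) * ((1/betaFn (n/2) ((j:ℝ)+1/2)) * u ^ (((j:ℝ)+1/2)-1))
      = (1/betaFn (1/2) (n/2)) * (u ^ (-(1:ℝ)/2) *
        ((Real.Gamma ((n+1)/2 + (j:ℕ)) / Real.Gamma ((n+1)/2)) /
          (Real.Gamma ((1:ℝ)/2 + (j:ℕ)) / Real.Gamma ((1:ℝ)/2)) * (c*u)^j / (Nat.factorial j : ℝ))) := by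
  have hG1 := Real.Gamma_pos_of_pos (by linarith : (0:ℝ) < n/2)
  have hG2 := Real.Gamma_pos_of_pos (by positivity : (0:ℝ) < (j:ℝ)+1/2)
  have hG4 := Real.Gamma_pos_of_pos (by linarith : (0:ℝ) < (n+1)/2)
  have hG5 := Real.Gamma_pos_of_pos (by norm_num : (0:ℝ) < 1/2)
  have hG6 := Real.Gamma_pos_of_pos (by positivity : (0:ℝ) < (n+1)/2 + (j:ℕ))
  have hfac : (0:ℝ) < (Nat.factorial j : ℝ) := by positivity
  have harg1 : (n/2) + ((j:ℝ)+1/2) = (n+1)/2 + (j:ℕ) := by push_cast; ring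
  have harg2 : (1:ℝ)/2 + (j:ℕ) = (j:ℝ)+1/2 := by push_cast; ring
  have harg3 : (1:ℝ)/2 + n/2 = (n+1)/2 := by ring
  have hupow : u ^ (((j:ℝ)+1/2)-1) = u ^ (j:ℕ) * u ^ (-(1:ℝ)/2) := by
    rw [← Real.rpow_natCast u j, ← Real.rpow_add hu]
    ring_nf
  rw [hupow]
  unfold betaFn
  rw [harg1, harg2, harg3, mul_pow]
  field_simp

lemma exp_tsum (c : ℝ) : ∑' j : ℕ, c^j / (Nat.factorial j : ℝ) = Real.exp c := by
  rw [Real.exp_eq_exp_ℝ, NormedSpace.exp_eq_tsum_div]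

theorem Pnt_integral_rep_complementary (n x δ : ℝ) (hn : 0 < n) (hx : 0 < x)
    (y : ℝ) (hy : y = x^2 / (n + x^2)) :
    Pnt n x δ =
      1/2 - (Real.exp (-δ^2/2) / (2 * betaFn (1/2) (n/2))) *
        ∫ t in (0:ℝ)..(1 - y),
          t ^ (n/2 - 1) * (1 - t) ^ (-(1:ℝ)/2) * kummerM ((n+1)/2) (1/2) (δ^2 * (1 - t) / 2) := by
  have hnx : 0 < n + x^2 := by positivity
  have hy0 : 0 < y := by rw [hy]; positivity
  have hy1 : y < 1 := by rw [hy, div_lt_one hnx]; nlinarith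
  have hn2 : (0:ℝ) < n/2 := by linarith
  set c : ℝ := δ^2/2 with hc
  have hc0 : (0:ℝ) ≤ c := by positivity
  set r : ℕ → ℝ := fun j => regIncBeta (1-y) (n/2) ((j:ℝ)+1/2) with hr
  have hr0 : ∀ j, 0 ≤ r j := fun j =>
    regIncBeta_nonneg (by linarith) (by linarith) hn2 (by positivity)
  have hr1 : ∀ j, r j ≤ 1 := fun j =>
    regIncBeta_le_one (by linarith) (by linarith) hn2 (by positivity)
  have S1 : Summable (fun j : ℕ => c^j / (Nat.factorial j : ℝ)) :=
    Real.summable_pow_div_factorial c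
  have S2 : Summable (fun j : ℕ => c^j / (Nat.factorial j : ℝ) * r j) := by
    refine S1.of_nonneg_of_le (fun j => mul_nonneg (by positivity) (hr0 j)) (fun j => ?_)
    exact mul_le_of_le_one_right (by positivity) (hr1 j)
  -- Step 1: reflection
  have step1 : Pnt n x δ = (1/2) * Real.exp (-δ^2/2) *
      (Real.exp c - ∑' j : ℕ, c^j / (Nat.factorial j : ℝ) * r j) := by
    unfold Pnt
    rw [← hy, ← hc]
    congr 1
    rw [show (Real.exp c - ∑' j : ℕ, c^j / (Nat.factorial j : ℝ) * r j)
        = (∑' j : ℕ, c^j / (Nat.factorial j : ℝ)) - ∑' j : ℕ, c^j / (Nat.factorial j : ℝ) * r j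
        from by rw [exp_tsum], ← Summable.tsum_sub S1 S2]
    refine tsum_congr fun j => ?_
    rw [regIncBeta_reflect hy0.le hy1.le (by positivity) hn2, hr]
    ring
  -- Step 2: swap sum and integral
  set F : ℕ → ℝ → ℝ := fun j t =>
    (c^j / (Nat.factorial j : ℝ)) * ((1/betaFn (n/2) ((j:ℝ)+1/2)) *
      (t ^ (n/2-1) * (1-t) ^ (((j:ℝ)+1/2)-1))) with hF
  have hFint : ∀ j : ℕ, IntegrableOn (F j) (Set.Ioc (0:ℝ) (1-y)) volume := by
    intro j
    have h1 : IntervalIntegrable (fun t : ℝ => t ^ (n/2-1) * (1-t) ^ (((j:ℝ)+1/2)-1))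
        volume 0 (1-y) :=
      (rb_intble hn2 (by positivity)).mono_set
        (Set.uIcc_subset_uIcc Set.left_mem_uIcc
          (by rw [Set.uIcc_of_le (by norm_num : (0:ℝ) ≤ 1)]; exact ⟨by linarith, by linarith⟩))
    rw [intervalIntegrable_iff_integrableOn_Ioc_of_le (by linarith)] at h1
    exact (h1.const_mul _).const_mul _
  have hFval : ∀ j : ℕ, ∫ t in Set.Ioc (0:ℝ) (1-y), F j t
      = c^j / (Nat.factorial j : ℝ) * r j := by
    intro j
    rw [hF, hr]
    simp only
    rw [MeasureTheory.integral_const_mul, MeasureTheory.integral_const_mul]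
    unfold regIncBeta
    rw [intervalIntegral.integral_of_le (by linarith : (0:ℝ) ≤ 1-y)]
  have hFnonneg : ∀ j : ℕ, ∀ t ∈ Set.Ioc (0:ℝ) (1-y), 0 ≤ F j t := by
    intro j t ht
    have hB := betaFn_pos hn2 (by positivity : (0:ℝ) < (j:ℝ)+1/2)
    have : 0 ≤ t ^ (n/2-1) * (1-t) ^ (((j:ℝ)+1/2)-1) :=
      mul_nonneg (Real.rpow_nonneg ht.1.le _) (Real.rpow_nonneg (by linarith [ht.2] : (0:ℝ) ≤ 1-t) _)
    positivity
  have hnormint : ∀ j : ℕ, ∫ t in Set.Ioc (0:ℝ) (1-y), ‖F j t‖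
      = c^j / (Nat.factorial j : ℝ) * r j := by
    intro j
    rw [← hFval j]
    refine setIntegral_congr_fun measurableSet_Ioc fun t ht => ?_
    exact Real.norm_of_nonneg (hFnonneg j t ht)
  have swap : ∑' j : ℕ, c^j / (Nat.factorial j : ℝ) * r j
      = ∫ t in Set.Ioc (0:ℝ) (1-y), ∑' j : ℕ, F j t := by
    rw [show (fun j : ℕ => c^j / (Nat.factorial j : ℝ) * r j)
        = fun j : ℕ => ∫ t in Set.Ioc (0:ℝ) (1-y), F j t from funext fun j => (hFval j).symm]
    refine MeasureTheory.integral_tsum_of_summable_integral_norm hFint ?_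
    rw [show (fun j : ℕ => ∫ t in Set.Ioc (0:ℝ) (1-y), ‖F j t‖)
        = fun j : ℕ => c^j / (Nat.factorial j : ℝ) * r j from funext hnormint]
    exact S2
  -- Step 3: pointwise identification
  have point : ∀ t ∈ Set.Ioc (0:ℝ) (1-y), (∑' j : ℕ, F j t)
      = (1/betaFn (1/2) (n/2)) *
        (t ^ (n/2-1) * (1-t) ^ (-(1:ℝ)/2) * kummerM ((n+1)/2) (1/2) (δ^2 * (1-t) / 2)) := by
    intro t ht
    have hu : (0:ℝ) < 1 - t := by linarith [ht.2]
    unfold kummerM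
    rw [← tsum_mul_left, ← tsum_mul_left]
    refine tsum_congr fun j => ?_
    have key := gamma_term_eq (c := c) (u := 1-t) hn hu j
    rw [hF]
    simp only
    calc (c^j / (Nat.factorial j : ℝ)) * ((1/betaFn (n/2) ((j:ℝ)+1/2)) *
          (t ^ (n/2-1) * (1-t) ^ (((j:ℝ)+1/2)-1)))
        = t ^ (n/2-1) * ((c^j / (Nat.factorial j : ℝ)) * ((1/betaFn (n/2) ((j:ℝ)+1/2)) *
            (1-t) ^ (((j:ℝ)+1/2)-1))) := by ring
      _ = _ := by
          rw [key]
          rw [show c * (1-t) = δ^2 * (1-t) / 2 from by rw [hc]; ring]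
          ring
  set s : Set ℝ := Set.Ioc (0:ℝ) (1-y)
  have step3 : ∫ t in s, ∑' j : ℕ, F j t
      = (1/betaFn (1/2) (n/2)) * ∫ t in (0:ℝ)..(1-y),
          t ^ (n/2-1) * (1-t) ^ (-(1:ℝ)/2) * kummerM ((n+1)/2) (1/2) (δ^2 * (1-t) / 2) := by
    rw [setIntegral_congr_fun measurableSet_Ioc point,
      MeasureTheory.integral_const_mul,
      intervalIntegral.integral_of_le (by linarith : (0:ℝ) ≤ 1-y)]
  -- Final assembly
  rw [step1, swap, step3]
  have hBpos := betaFn_pos (by norm_num : (0:ℝ) < 1/2) hn2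
  have hexp : Real.exp (-δ^2/2) * Real.exp c = 1 := by
    rw [← Real.exp_add, show -δ^2/2 + c = 0 from by rw [hc]; ring, Real.exp_zero]
  have h1 : (1/2:ℝ) * Real.exp (-δ^2/2) * Real.exp c = 1/2 := by
    rw [mul_assoc, hexp, mul_one]
  rw [mul_sub, h1]
  have h2 : (1/2:ℝ) * Real.exp (-δ^2/2) * ((1/betaFn (1/2) (n/2)) *
      ∫ t in (0:ℝ)..(1-y), t ^ (n/2-1) * (1-t) ^ (-(1:ℝ)/2) *
        kummerM ((n+1)/2) (1/2) (δ^2 * (1-t) / 2))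
      = Real.exp (-δ^2/2) / (2 * betaFn (1/2) (n/2)) *
      ∫ t in (0:ℝ)..(1-y), t ^ (n/2-1) * (1-t) ^ (-(1:ℝ)/2) *
        kummerM ((n+1)/2) (1/2) (δ^2 * (1-t) / 2) := by
    field_simp
  linear_combination h2
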